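/- Let (X, π) be a finite symmetric zero-sum two-player game, i.e., π(x, y) = −π(y, x) for all x, y ∈ X. Then imitation is subject to a money pump in (X, π) if and only if (X, π) is a generalized rock-paper-scissors game. -/
import Mathlib


/-- The imitator's action sequence: `y₀` initially; imitate the opponent's previous
action iff it earned a strictly positive relative payoff. -/
noncomputable def imitSeq {X : Type*} (Δ : X → X → ℝ) (x : ℕ → X) (y0 : X) : ℕ → X
  | 0 => y0
  | t + 1 => if 0 < Δ (x t) (imitSeq Δ x y0 t) then x t else imitSeq Δ x y0 t

/-- Imitation is subject to a money pump. -/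
def MoneyPump {X : Type*} (Δ : X → X → ℝ) : Prop :=
  ∀ M : ℝ, ∃ (y0 : X) (x : ℕ → X) (T : ℕ),
    M < ∑ t ∈ Finset.range (T + 1), Δ (x t) (imitSeq Δ x y0 t)

/-- A symmetric zero-sum game is a generalized rock-paper-scissors game if there is a
nonempty subset `S` of actions such that for every `y ∈ S` there is `x ∈ S` with
strictly positive payoff. -/
def GeneralizedRPS {X : Type*} (Δ : X → X → ℝ) : Prop :=
  ∃ S : Set X, S.Nonempty ∧ ∀ y ∈ S, ∃ x ∈ S, 0 < Δ x y

theorem stmt5 {X : Type*} [Fintype X] [Nonempty X] (π : X → X → ℝ)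
    (hzs : ∀ x y, π x y = -π y x)
    (Δ : X → X → ℝ) (hΔ : ∀ x y, Δ x y = π x y - π y x) :
    MoneyPump Δ ↔ GeneralizedRPS π := by
  classical
  have hΔπ : ∀ x y, Δ x y = 2 * π x y := by
    intro x y; rw [hΔ, hzs y x]; ring
  have hpos : ∀ x y, (0 < Δ x y ↔ 0 < π x y) := by
    intro x y; rw [hΔπ]; constructor <;> intro h <;> linarith
  constructor
  · -- MoneyPump → GRPS
    intro hmp
    by_contra hg
    unfold GeneralizedRPS at hg
    push_neg at hg
    -- the "beats" relation is well-founded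
    have hwf : WellFounded (fun a b : X => 0 < π a b) := by
      rw [WellFounded.wellFounded_iff_has_min]
      intro s hs
      obtain ⟨y, hy, hmax⟩ := hg s hs
      exact ⟨y, hy, fun x hx => not_lt.2 (hmax x hx)⟩
    have hirr : ∀ a : X, ¬ Relation.TransGen (fun a b : X => 0 < π a b) a a :=
      fun a => (WellFounded.isIrrefl hwf.transGen).irrefl a
    -- an upper bound C on Δ
    have hne : (Finset.univ : Finset (X × X)).Nonempty := Finset.univ_nonempty
    set C : ℝ := (Finset.univ : Finset (X × X)).sup' hne (fun p => Δ p.1 p.2) with hCdef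
    have hC : ∀ x y : X, Δ x y ≤ C := fun x y =>
      Finset.le_sup' (f := fun p : X × X => Δ p.1 p.2) (Finset.mem_univ (x, y))
    have hC0 : 0 ≤ C := by
      obtain ⟨z⟩ := ‹Nonempty X›
      have := hC z z
      have hz : Δ z z = 0 := by rw [hΔ]; ring
      linarith
    obtain ⟨y0, x, T, hsum⟩ := hmp ((Fintype.card X : ℝ) * C)
    set y : ℕ → X := imitSeq Δ x y0 with hy
    have hsucc : ∀ t, y (t+1) = if 0 < Δ (x t) (y t) then x t else y t := by
      intro t
      show imitSeq Δ x y0 (t+1) = _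
      rw [imitSeq]
    -- descent along the imitator's sequence
    have hchain : ∀ s t : ℕ, s ≤ t →
        Relation.ReflTransGen (fun a b : X => 0 < π a b) (y t) (y s) := by
      intro s t hst
      induction t with
      | zero => cases Nat.le_zero.mp hst; exact Relation.ReflTransGen.refl
      | succ t ih =>
        rcases Nat.lt_or_ge s (t+1) with h | h
        · have ht := ih (Nat.lt_succ_iff.mp h)
          by_cases hc : 0 < Δ (x t) (y t)
          · rw [hsucc t, if_pos hc]
            exact Relation.ReflTransGen.head ((hpos _ _).mp hc) ht
          · rw [hsucc t, if_neg hc]; exact ht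
        · have : s = t + 1 := le_antisymm hst h
          rw [this]
    set F : Finset ℕ := (Finset.range (T+1)).filter (fun t => 0 < Δ (x t) (y t)) with hF
    have key : ∀ s t : ℕ, 0 < Δ (x s) (y s) → s < t → y t ≠ y s := by
      intro s t hsw hlt heq
      have h1 : y (s+1) = x s := by rw [hsucc s, if_pos hsw]
      have h2 := hchain (s+1) t hlt
      have h3 : Relation.TransGen (fun a b : X => 0 < π a b) (y t) (y s) :=
        Relation.TransGen.tail' h2 (by rw [h1]; exact (hpos _ _).mp hsw)
      rw [heq] at h3
      exact hirr (y s) h3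
    have hinj : Set.InjOn (fun t => y t) F := by
      intro s hs t ht hst
      simp only at hst
      by_contra hne'
      rcases Ne.lt_or_gt hne' with h | h
      · have hs' : s ∈ F := hs
        exact key s t (Finset.mem_filter.mp hs').2 h hst.symm
      · have ht' : t ∈ F := ht
        exact key t s (Finset.mem_filter.mp ht').2 h hst
    have hcard : F.card ≤ Fintype.card X := by
      have := Finset.card_le_card_of_injOn (fun t => y t) (fun a _ => Finset.mem_univ _) hinj
      simpa using this
    -- bound the sum
    have hsum1 : ∑ t ∈ Finset.range (T+1), Δ (x t) (y t) ≤ ∑ t ∈ F, Δ (x t) (y t) := by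
      rw [← Finset.sum_filter_add_sum_filter_not (Finset.range (T+1))
          (fun t => 0 < Δ (x t) (y t))]
      have hnonpos : ∑ t ∈ (Finset.range (T+1)).filter (fun t => ¬ 0 < Δ (x t) (y t)),
          Δ (x t) (y t) ≤ 0 := by
        apply Finset.sum_nonpos
        intro t ht
        exact not_lt.mp (Finset.mem_filter.mp ht).2
      rw [← hF]
      linarith
    have hsum2 : ∑ t ∈ F, Δ (x t) (y t) ≤ F.card • C :=
      Finset.sum_le_card_nsmul F _ C (fun t _ => hC _ _)
    have hsum3 : (F.card : ℝ) * C ≤ (Fintype.card X : ℝ) * C := by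
      apply mul_le_mul_of_nonneg_right _ hC0
      exact_mod_cast hcard
    rw [nsmul_eq_mul] at hsum2
    linarith
  · -- GRPS → MoneyPump
    rintro ⟨S, ⟨s0, hs0⟩, hS⟩ M
    have hgex : ∀ y : X, ∃ x : X, y ∈ S → x ∈ S ∧ 0 < π x y := by
      intro y
      by_cases hy : y ∈ S
      · obtain ⟨x, hx, hxy⟩ := hS y hy; exact ⟨x, fun _ => ⟨hx, hxy⟩⟩
      · exact ⟨y, fun h => absurd h hy⟩
    choose g hgS using hgex
    set a : ℕ → X := fun n => g^[n] s0 with ha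
    have haS : ∀ n, a n ∈ S := by
      intro n; induction n with
      | zero => exact hs0
      | succ n ih =>
        have : a (n+1) = g (a n) := by
          simp only [ha, Function.iterate_succ_apply']
        rw [this]; exact (hgS (a n) ih).1
    have hstep : ∀ n, 0 < π (a (n+1)) (a n) := by
      intro n
      have : a (n+1) = g (a n) := by
        simp only [ha, Function.iterate_succ_apply']
      rw [this]; exact (hgS (a n) (haS n)).2
    set x : ℕ → X := fun t => a (t+1) with hx
    have himit : ∀ t, imitSeq Δ x (a 0) t = a t := by
      intro t
      induction t with
      | zero => rfl
      | succ t ih =>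
        have hc : 0 < Δ (x t) (imitSeq Δ x (a 0) t) := by
          rw [ih]; exact (hpos _ _).mpr (hstep t)
        rw [imitSeq, if_pos hc]
    -- lower bound ε
    set P : Finset (X × X) := (Finset.univ : Finset (X × X)).filter
        (fun p => 0 < Δ p.1 p.2) with hP
    have hPne : P.Nonempty := by
      refine ⟨(a 1, a 0), ?_⟩
      simp only [hP, Finset.mem_filter, Finset.mem_univ, true_and]
      exact (hpos _ _).mpr (hstep 0)
    set ε : ℝ := P.inf' hPne (fun p => Δ p.1 p.2) with hε
    have hε0 : 0 < ε := by
      rw [hε, Finset.lt_inf'_iff]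
      intro p hp
      exact (Finset.mem_filter.mp hp).2
    have hεle : ∀ t : ℕ, ε ≤ Δ (x t) (imitSeq Δ x (a 0) t) := by
      intro t
      rw [himit t]
      have hmem : ((a (t+1), a t) : X × X) ∈ P := by
        simp only [hP, Finset.mem_filter, Finset.mem_univ, true_and]
        exact (hpos _ _).mpr (hstep t)
      exact Finset.inf'_le (fun p : X × X => Δ p.1 p.2) hmem
    obtain ⟨T, hT⟩ := exists_nat_gt (M / ε)
    refine ⟨a 0, x, T, ?_⟩
    have hlow : ((T+1 : ℕ) : ℝ) * ε ≤ ∑ t ∈ Finset.range (T + 1),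
        Δ (x t) (imitSeq Δ x (a 0) t) := by
      have := Finset.card_nsmul_le_sum (Finset.range (T+1))
          (fun t => Δ (x t) (imitSeq Δ x (a 0) t)) ε (fun t _ => hεle t)
      simpa [nsmul_eq_mul] using this
    have hM : M < ((T+1 : ℕ) : ℝ) * ε := by
      have h1 : M / ε < ((T+1 : ℕ) : ℝ) := by
        push_cast
        linarith
      calc M = (M / ε) * ε := by field_simp
        _ < ((T+1 : ℕ) : ℝ) * ε := mul_lt_mul_of_pos_right h1 hε0
    linarith
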